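/- Let d be a positive integer and ε a positive real number. Then the set of pairs (n, m), where n ∈ ℤ³ is a primitive vector and m is an integer with 1 ≤ m ≤ d, such that the set {v ∈ ℝ³ : v₁ ≥ 0, v₂ ≥ 0, v₃ ≥ 0 and ⟨n, v⟩ ≤ m} is bounded, contains the dilated tetrahedron ε·T (where T is the convex hull of 0, e₁, e₂, e₃), and such that the set {v ∈ ℝ³ : v₁ ≥ 0, v₂ ≥ 0, v₃ ≥ 0 and ⟨n, v⟩ > m} is nonempty, is finite. -/
import Mathlib


open Pointwise

/-- The unit coordinate tetrahedron in `ℝ³`: the convex hull of the origin and the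
three standard basis vectors. -/
def unitTetra : Set (Fin 3 → ℝ) :=
  convexHull ℝ ({0, Pi.single 0 1, Pi.single 1 1, Pi.single 2 1} : Set (Fin 3 → ℝ))

theorem stmt7 (d : ℕ) (hd : 0 < d) (ε : ℝ) (hε : 0 < ε) :
    {nm : (Fin 3 → ℤ) × ℤ |
      Int.gcd (Int.gcd (nm.1 0) (nm.1 1)) (nm.1 2) = 1 ∧
      1 ≤ nm.2 ∧ nm.2 ≤ (d : ℤ) ∧
      Bornology.IsBounded
        {v : Fin 3 → ℝ | (∀ i, 0 ≤ v i) ∧ ∑ i, (nm.1 i : ℝ) * v i ≤ (nm.2 : ℝ)} ∧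
      ε • unitTetra ⊆
        {v : Fin 3 → ℝ | (∀ i, 0 ≤ v i) ∧ ∑ i, (nm.1 i : ℝ) * v i ≤ (nm.2 : ℝ)} ∧
      {v : Fin 3 → ℝ | (∀ i, 0 ≤ v i) ∧ (nm.2 : ℝ) < ∑ i, (nm.1 i : ℝ) * v i}.Nonempty
      }.Finite := by
  set B : ℤ := ⌈(d : ℝ) / ε⌉ with hBdef
  apply Set.Finite.subset
    ((Set.finite_Icc (fun _ : Fin 3 => (1 : ℤ)) (fun _ => B)).prod (Set.finite_Icc 1 (d : ℤ)))
  rintro ⟨n, m⟩ ⟨-, h1, h2, hbd, hsub, -⟩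
  have hm1 : (1 : ℝ) ≤ (m : ℝ) := by exact_mod_cast h1
  have key : ∀ i, 1 ≤ n i ∧ n i ≤ B := by
    intro i
    constructor
    · by_contra hni
      push_neg at hni
      have hni' : (n i : ℝ) ≤ 0 := by exact_mod_cast (by omega : n i ≤ 0)
      obtain ⟨C, hC⟩ := isBounded_iff_forall_norm_le.1 hbd
      set t : ℝ := max C 0 + 1 with ht
      have ht0 : 0 ≤ t := by positivity
      have hmem : (t • (Pi.single i 1 : Fin 3 → ℝ)) ∈
          {v : Fin 3 → ℝ | (∀ i, 0 ≤ v i) ∧ ∑ j, (n j : ℝ) * v j ≤ (m : ℝ)} := by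
        constructor
        · intro j
          simp only [Pi.smul_apply, Pi.single_apply, smul_eq_mul]
          split_ifs <;> simp [ht0]
        · have hsum : ∑ j, (n j : ℝ) * (t • (Pi.single i 1 : Fin 3 → ℝ)) j = (n i : ℝ) * t := by
            simp only [Pi.smul_apply, Pi.single_apply, smul_eq_mul, mul_ite, mul_one, mul_zero]
            rw [Finset.sum_ite_eq' Finset.univ i fun j => (n j : ℝ) * t]
            simp
          rw [hsum]
          have : (n i : ℝ) * t ≤ 0 := mul_nonpos_of_nonpos_of_nonneg hni' ht0
          linarith
      have h1 := hC _ hmem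
      have h2 : t ≤ ‖t • (Pi.single i 1 : Fin 3 → ℝ)‖ := by
        have := norm_le_pi_norm (t • (Pi.single i 1 : Fin 3 → ℝ)) i
        simpa [Real.norm_eq_abs, abs_of_nonneg ht0] using this
      have := le_max_left C 0
      linarith
    · have hmemT : (Pi.single i 1 : Fin 3 → ℝ) ∈ unitTetra := by
        apply subset_convexHull
        fin_cases i <;> simp
      obtain ⟨-, hsum⟩ := hsub (Set.smul_mem_smul_set hmemT)
      have hsum' : ∑ j, (n j : ℝ) * (ε • (Pi.single i 1 : Fin 3 → ℝ)) j = (n i : ℝ) * ε := by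
        simp only [Pi.smul_apply, Pi.single_apply, smul_eq_mul, mul_ite, mul_one, mul_zero]
        rw [Finset.sum_ite_eq' Finset.univ i fun j => (n j : ℝ) * ε]
        simp
      rw [hsum'] at hsum
      have hmd : (m : ℝ) ≤ (d : ℝ) := by exact_mod_cast h2
      have hle : (n i : ℝ) ≤ (d : ℝ) / ε := by
        rw [le_div_iff₀ hε]
        linarith
      have : (n i : ℝ) ≤ (B : ℝ) := le_trans hle (Int.le_ceil _)
      exact_mod_cast this
  refine ⟨Set.mem_Icc.2 ⟨fun i => (key i).1, fun i => (key i).2⟩, Set.mem_Icc.2 ⟨h1, h2⟩⟩
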